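/- Let D ⊂ ℝ^d, let ℓ: ℕ → ℕ∪{∞} be non-decreasing, let α > 0, and let f ∈ U^{α,∞}_ℓ(D). Then for every e ∈ ℕ, every matrix C ∈ ℝ^{d×e}, and every b ∈ ℝ^d, there exists R ∈ (0,∞) such that the map x ↦ f(Cx + b) belongs to R·U^{α,∞}_ℓ(E), where E := { x ∈ ℝ^e : Cx + b ∈ D } ⊂ ℝ^e. -/

import Mathlib

open MeasureTheory ENNReal

noncomputable section

open Pointwise

/-- The ReLU activation function. -/
def relu (x : ℝ) : ℝ := max x 0

/-- A (fully connected feed-forward) neural network: a tuple of affine layers.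
`L` is the depth (number of affine maps), `dims j` the width of layer `j`
(only `dims 0, …, dims L` are relevant), `A j`/`b j` the weight matrix and bias
of the `(j+1)`-th affine map. -/
structure ReLUNet where
  L : ℕ
  dims : ℕ → ℕ
  A : (j : ℕ) → Matrix (Fin (dims (j + 1))) (Fin (dims j)) ℝ
  b : (j : ℕ) → Fin (dims (j + 1)) → ℝ

namespace ReLUNet

/-- The hidden representation after `j` layers, each affine map followed by ReLU. -/
def hidden (ψ : ReLUNet) : (j : ℕ) → (Fin (ψ.dims 0) → ℝ) → Fin (ψ.dims j) → ℝ
  | 0, x => x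
  | (j + 1), x => fun i => relu ((∑ k, ψ.A j i k * ψ.hidden j x k) + ψ.b j i)

/-- The ReLU realization `R_σ ψ = T_L ∘ (σ ∘ T_{L-1}) ∘ ⋯ ∘ (σ ∘ T_1)`:
the final affine map is applied without activation. -/
def realize (ψ : ReLUNet) (x : Fin (ψ.dims 0) → ℝ) (i : Fin (ψ.dims (ψ.L - 1 + 1))) : ℝ :=
  (∑ k, ψ.A (ψ.L - 1) i k * ψ.hidden (ψ.L - 1) x k) + ψ.b (ψ.L - 1) i

open Classical in
/-- `W ψ`: the number of nonzero weights and biases of `ψ`. -/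
def W (ψ : ReLUNet) : ℕ :=
  ∑ j ∈ Finset.range ψ.L,
    ((((Finset.univ : Finset (Fin (ψ.dims (j + 1)) × Fin (ψ.dims j))).filter
        fun p => ψ.A j p.1 p.2 ≠ 0).card)
      + (((Finset.univ : Finset (Fin (ψ.dims (j + 1)))).filter fun i => ψ.b j i ≠ 0).card))

/-- All weight and bias entries have magnitude at most 1, i.e. `‖ψ‖_NN ≤ 1`. -/
def normBdd (ψ : ReLUNet) : Prop :=
  ∀ j < ψ.L, (∀ i k, |ψ.A j i k| ≤ 1) ∧ (∀ i, |ψ.b j i| ≤ 1)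

end ReLUNet

/-- `Σ_{d,n}^ℓ` : realizations of ReLU networks `ℝ^d → ℝ` with at most `n` nonzero
weights, depth at most `ℓ n`, and weight magnitudes at most `1`. -/
def SigmaSet (d n : ℕ) (ℓ : ℕ → ℕ∞) : Set ((Fin d → ℝ) → ℝ) :=
  { g | ∃ ψ : ReLUNet, ∃ h0 : ψ.dims 0 = d, ∃ hout : ψ.dims (ψ.L - 1 + 1) = 1,
      1 ≤ ψ.L ∧ ψ.W ≤ n ∧ (ψ.L : ℕ∞) ≤ ℓ n ∧ ψ.normBdd ∧
      ∀ x : Fin d → ℝ, g x = ψ.realize (fun i => x (Fin.cast h0 i)) (Fin.cast hout.symm 0) }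

/-- The sup-distance (in `ℝ≥0∞`) between two functions over a set `D`. -/
def supDist {d : ℕ} (D : Set (Fin d → ℝ)) (f g : (Fin d → ℝ) → ℝ) : ℝ≥0∞ :=
  ⨆ x ∈ D, ENNReal.ofReal |f x - g x|

/-- The unit ball `U^{α,∞}_ℓ(D)` of the neural network approximation space:
functions bounded by `1` on `D` which are approximated in `L^∞(D)` at rate `n^{-α}`
by networks from `Σ_{d,n}^ℓ`. -/
def UnitBall (d : ℕ) (α : ℝ) (ℓ : ℕ → ℕ∞) (D : Set (Fin d → ℝ)) :
    Set ((Fin d → ℝ) → ℝ) :=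
  { f | (∀ x ∈ D, |f x| ≤ 1) ∧
      ∀ n : ℕ, 1 ≤ n →
        (⨅ g ∈ SigmaSet d n ℓ, supDist D f g) ≤ ENNReal.ofReal ((n : ℝ) ^ (-α)) }

lemma relu_const_mul {c : ℝ} (hc : 0 ≤ c) (x : ℝ) : relu (c * x) = c * relu x := by
  unfold relu
  rw [mul_max_of_nonneg _ _ hc, mul_zero]

def precompNet (ψ : ReLUNet) {d : ℕ} (e : ℕ) (h0 : ψ.dims 0 = d)
    (C : Matrix (Fin d) (Fin e) ℝ) (bv : Fin d → ℝ) (s R : ℝ) : ReLUNet where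
  L := ψ.L
  dims := fun j => if j = 0 then e else ψ.dims j
  A := fun j =>
    match j with
    | 0 => fun i k => ((if 0 = ψ.L - 1 then s / R else 1) / s) *
        ∑ m : Fin d, ψ.A 0 i (Fin.cast h0.symm m) * C m k
    | j + 1 => fun i k => (if j + 1 = ψ.L - 1 then s / R else 1) * ψ.A (j + 1) i k
  b := fun j =>
    match j with
    | 0 => fun i => ((if 0 = ψ.L - 1 then s / R else 1) / s) *
        ((∑ m : Fin d, ψ.A 0 i (Fin.cast h0.symm m) * bv m) + ψ.b 0 i)
    | j + 1 => fun i => ((if j + 1 = ψ.L - 1 then s / R else 1) / s) * ψ.b (j + 1) i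

example (ψ : ReLUNet) {d : ℕ} (e : ℕ) (h0 : ψ.dims 0 = d)
    (C : Matrix (Fin d) (Fin e) ℝ) (bv : Fin d → ℝ) (s R : ℝ) :
    (precompNet ψ e h0 C bv s R).dims 0 = e := rfl

example (ψ : ReLUNet) {d : ℕ} (e : ℕ) (h0 : ψ.dims 0 = d) (hout : ψ.dims (ψ.L - 1 + 1) = 1)
    (C : Matrix (Fin d) (Fin e) ℝ) (bv : Fin d → ℝ) (s R : ℝ) :
    (precompNet ψ e h0 C bv s R).dims ((precompNet ψ e h0 C bv s R).L - 1 + 1) = 1 := hout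

lemma precomp_affine (ψ : ReLUNet) {d e : ℕ} (h0 : ψ.dims 0 = d)
    (C : Matrix (Fin d) (Fin e) ℝ) (bv : Fin d → ℝ) {s R : ℝ}
    (hs : 0 < s) (hR : 0 < R) (x : Fin e → ℝ) :
    ∀ j, j ≤ ψ.L - 1 → ∀ i : Fin (ψ.dims (j + 1)),
      (∑ k, (precompNet ψ e h0 C bv s R).A j i k *
          (precompNet ψ e h0 C bv s R).hidden j x k) + (precompNet ψ e h0 C bv s R).b j i
        = (if j = ψ.L - 1 then R⁻¹ else s⁻¹) *
          ((∑ k, ψ.A j i k *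
              ψ.hidden j (fun m => C.mulVec x (Fin.cast h0 m) + bv (Fin.cast h0 m)) k)
            + ψ.b j i) := by
  intro j
  induction j with
  | zero =>
    intro _ i
    have hA0 : ∀ (i : Fin (ψ.dims 1)) (k : Fin ((precompNet ψ e h0 C bv s R).dims 0)), (precompNet ψ e h0 C bv s R).A 0 i k
        = ((if 0 = ψ.L - 1 then s / R else 1) / s) *
          ∑ m : Fin d, ψ.A 0 i (Fin.cast h0.symm m) * C m k := fun _ _ => rfl
    have hb0 : ∀ (i : Fin (ψ.dims 1)), (precompNet ψ e h0 C bv s R).b 0 i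
        = ((if 0 = ψ.L - 1 then s / R else 1) / s) *
          ((∑ m : Fin d, ψ.A 0 i (Fin.cast h0.symm m) * bv m) + ψ.b 0 i) := fun _ => rfl
    have hfac : ((if 0 = ψ.L - 1 then s / R else 1) / s)
        = (if (0:ℕ) = ψ.L - 1 then R⁻¹ else s⁻¹) := by
      split <;> field_simp <;> ring
    simp only [ReLUNet.hidden, hA0, hb0, hfac]
    have hre : (∑ k : Fin (ψ.dims 0),
        ψ.A 0 i k * (C.mulVec x (Fin.cast h0 k) + bv (Fin.cast h0 k)))
        = ∑ m : Fin d, ψ.A 0 i (Fin.cast h0.symm m) * (C.mulVec x m + bv m) := by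
      refine (Fintype.sum_equiv (finCongr h0) _ _ ?_)
      intro m; simp
    rw [hre]
    have key : (∑ k : Fin ((precompNet ψ e h0 C bv s R).dims 0), (∑ m : Fin d, ψ.A 0 i (Fin.cast h0.symm m) * C m k) * x k)
        = ∑ m : Fin d, ψ.A 0 i (Fin.cast h0.symm m) * Matrix.mulVec C x m := by
      simp only [Matrix.mulVec, dotProduct, Finset.mul_sum, Finset.sum_mul]
      rw [Finset.sum_comm]
      exact Finset.sum_congr rfl fun m _ => Finset.sum_congr rfl fun k _ => by ring
    simp only [mul_assoc, ← Finset.mul_sum]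
    rw [key]
    simp only [mul_add, Finset.sum_add_distrib]
    ring
  | succ j ih =>
    intro hj i
    have hj' : j ≤ ψ.L - 1 := le_trans (Nat.le_succ j) hj
    have hne : ¬ (j = ψ.L - 1) := by omega
    have hhid : ∀ k : Fin ((precompNet ψ e h0 C bv s R).dims (j+1)), (precompNet ψ e h0 C bv s R).hidden (j+1) x k
        = s⁻¹ * ψ.hidden (j+1) (fun m => C.mulVec x (Fin.cast h0 m) + bv (Fin.cast h0 m)) k := by
      intro k
      show relu _ = s⁻¹ * relu _
      rw [ih hj' k, if_neg hne]
      exact relu_const_mul (inv_nonneg.mpr hs.le) _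
    have hA : ∀ (i : Fin (ψ.dims (j+1+1))) (k : Fin ((precompNet ψ e h0 C bv s R).dims (j+1))),
        (precompNet ψ e h0 C bv s R).A (j+1) i k
        = (if j + 1 = ψ.L - 1 then s / R else 1) * ψ.A (j+1) i k := fun _ _ => rfl
    have hb : ∀ (i : Fin (ψ.dims (j+1+1))), (precompNet ψ e h0 C bv s R).b (j+1) i
        = ((if j + 1 = ψ.L - 1 then s / R else 1) / s) * ψ.b (j+1) i := fun _ => rfl
    simp only [hhid, hA, hb]
    rcases eq_or_ne (j+1) (ψ.L - 1) with h | h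
    · simp only [if_pos h]
      rw [mul_add, Finset.mul_sum]
      congr 1
      · exact Finset.sum_congr rfl fun k _ => by field_simp; try ring
      · field_simp
        try ring
    · simp only [if_neg h]
      rw [mul_add, Finset.mul_sum]
      congr 1
      · exact Finset.sum_congr rfl fun k _ => by field_simp; try ring
      · field_simp
        try ring

lemma precomp_realize (ψ : ReLUNet) {d e : ℕ} (h0 : ψ.dims 0 = d)
    (C : Matrix (Fin d) (Fin e) ℝ) (bv : Fin d → ℝ) {s R : ℝ}
    (hs : 0 < s) (hR : 0 < R) (x : Fin e → ℝ) (i : Fin (ψ.dims (ψ.L - 1 + 1))) :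
    (precompNet ψ e h0 C bv s R).realize x i
      = R⁻¹ * ψ.realize (fun m => C.mulVec x (Fin.cast h0 m) + bv (Fin.cast h0 m)) i := by
  have h := precomp_affine ψ h0 C bv hs hR x (ψ.L - 1) le_rfl i
  rw [if_pos rfl] at h
  exact h

lemma SigmaSet_mono {d m k : ℕ} {ℓ : ℕ → ℕ∞} (hmono : Monotone ℓ) (h : m ≤ k) :
    SigmaSet d m ℓ ⊆ SigmaSet d k ℓ := by
  rintro g ⟨ψ, h0, hout, h1, h2, h3, h4, h5⟩
  exact ⟨ψ, h0, hout, h1, h2.trans h, h3.trans (hmono h), h4, h5⟩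

lemma zero_mem_sigma (e n : ℕ) (ℓ : ℕ → ℕ∞) (h1 : 1 ≤ ℓ n) :
    (fun _ => (0:ℝ)) ∈ SigmaSet e n ℓ := by
  refine ⟨⟨1, fun j => if j = 0 then e else 1, fun _ => 0, fun _ => 0⟩, rfl, rfl, le_rfl,
    ?_, by simpa using h1, ?_, ?_⟩
  · simp [ReLUNet.W]
  · intro j hj
    constructor <;> intro i <;> simp [Matrix.zero_apply]
  · intro x
    simp [ReLUNet.realize]
    exact (Finset.sum_eq_zero fun k _ => zero_mul _).symm

lemma sigma_comp {d e n : ℕ} {ℓ : ℕ → ℕ∞} {g : (Fin d → ℝ) → ℝ}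
    (hg : g ∈ SigmaSet d n ℓ) (C : Matrix (Fin d) (Fin e) ℝ) (bv : Fin d → ℝ)
    {s R : ℝ} (hs1 : 1 ≤ s) (hsR : s ≤ R)
    (hC : ∀ k : Fin e, (∑ m, |C m k|) ≤ s) (hb : (∑ m, |bv m|) + 1 ≤ s)
    (hℓ : ℓ n ≤ ℓ ((e+1)*n)) :
    (fun x => R⁻¹ * g (C.mulVec x + bv)) ∈ SigmaSet e ((e+1)*n) ℓ := by
  classical
  obtain ⟨ψ, h0, hout, hL, hW, hdepth, hnorm, hreal⟩ := hg
  have hs : (0:ℝ) < s := lt_of_lt_of_le one_pos hs1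
  have hR : (0:ℝ) < R := lt_of_lt_of_le hs hsR
  refine ⟨precompNet ψ e h0 C bv s R, rfl, hout, hL, ?_, hdepth.trans hℓ, ?_, ?_⟩
  · -- weight count
    have hle : (precompNet ψ e h0 C bv s R).W ≤ (e+1) * ψ.W := by
      rw [ReLUNet.W, ReLUNet.W, Finset.mul_sum]
      refine Finset.sum_le_sum ?_
      intro j hj
      rcases j with _ | j
      · -- layer 0
        set T : Finset (Fin (ψ.dims 1)) :=
          Finset.filter (fun i => ∃ m : Fin d, ψ.A 0 i (Fin.cast h0.symm m) ≠ 0)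
            Finset.univ with hTdef
        have step3 : T.card ≤ (Finset.filter
            (fun p : Fin (ψ.dims (0+1)) × Fin (ψ.dims 0) => ψ.A 0 p.1 p.2 ≠ 0)
            Finset.univ).card := by
          have hsub : T ⊆ (Finset.filter
              (fun p : Fin (ψ.dims (0+1)) × Fin (ψ.dims 0) => ψ.A 0 p.1 p.2 ≠ 0)
              Finset.univ).image Prod.fst := by
            intro i hi
            simp only [hTdef, Finset.mem_filter, Finset.mem_univ, true_and] at hi
            obtain ⟨m, hm⟩ := hi
            exact Finset.mem_image.mpr ⟨(i, Fin.cast h0.symm m), by simp [hm], rfl⟩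
          exact le_trans (Finset.card_le_card hsub) Finset.card_image_le
        have step1 : (Finset.filter
            (fun p : Fin ((precompNet ψ e h0 C bv s R).dims (0+1)) ×
                Fin ((precompNet ψ e h0 C bv s R).dims 0) =>
              (precompNet ψ e h0 C bv s R).A 0 p.1 p.2 ≠ 0) Finset.univ).card
            ≤ T.card * e := by
          have hsub : (Finset.filter
              (fun p : Fin ((precompNet ψ e h0 C bv s R).dims (0+1)) ×
                  Fin ((precompNet ψ e h0 C bv s R).dims 0) =>
                (precompNet ψ e h0 C bv s R).A 0 p.1 p.2 ≠ 0) Finset.univ)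
              ⊆ T ×ˢ (Finset.univ : Finset (Fin e)) := by
            intro p hp
            simp only [Finset.mem_filter, Finset.mem_univ, true_and] at hp
            have hsum : (∑ m : Fin d, ψ.A 0 p.1 (Fin.cast h0.symm m) * C m p.2) ≠ 0 := by
              intro hz
              apply hp
              show ((if 0 = ψ.L - 1 then s / R else 1) / s) *
                (∑ m : Fin d, ψ.A 0 p.1 (Fin.cast h0.symm m) * C m p.2) = 0
              rw [hz, mul_zero]
            have hex : ∃ m : Fin d, ψ.A 0 p.1 (Fin.cast h0.symm m) ≠ 0 := by
              by_contra hall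
              push_neg at hall
              exact hsum (Finset.sum_eq_zero fun m _ => by rw [hall m, zero_mul])
            refine Finset.mem_product.mpr ?_
            exact ⟨by simp only [hTdef, Finset.mem_filter, Finset.mem_univ, true_and]; exact hex,
              Finset.mem_univ _⟩
          calc _ ≤ (T ×ˢ (Finset.univ : Finset (Fin e))).card := Finset.card_le_card hsub
            _ = T.card * e := by rw [Finset.card_product, Finset.card_univ, Fintype.card_fin]
        have step2 : (Finset.filter
            (fun i : Fin ((precompNet ψ e h0 C bv s R).dims (0+1)) =>
              (precompNet ψ e h0 C bv s R).b 0 i ≠ 0) Finset.univ).card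
            ≤ T.card + (Finset.filter
              (fun i : Fin (ψ.dims (0+1)) => ψ.b 0 i ≠ 0) Finset.univ).card := by
          have hsub : (Finset.filter
              (fun i : Fin ((precompNet ψ e h0 C bv s R).dims (0+1)) =>
                (precompNet ψ e h0 C bv s R).b 0 i ≠ 0) Finset.univ)
              ⊆ T ∪ (Finset.filter (fun i : Fin (ψ.dims (0+1)) => ψ.b 0 i ≠ 0) Finset.univ) := by
            intro i hi
            simp only [Finset.mem_filter, Finset.mem_univ, true_and] at hi
            have hsum : (∑ m : Fin d, ψ.A 0 i (Fin.cast h0.symm m) * bv m) + ψ.b 0 i ≠ 0 := by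
              intro hz
              apply hi
              show ((if 0 = ψ.L - 1 then s / R else 1) / s) *
                ((∑ m : Fin d, ψ.A 0 i (Fin.cast h0.symm m) * bv m) + ψ.b 0 i) = 0
              rw [hz, mul_zero]
            refine Finset.mem_union.mpr ?_
            by_cases hbz : ψ.b 0 i ≠ 0
            · exact Or.inr (Finset.mem_filter.mpr ⟨Finset.mem_univ _, hbz⟩)
            · push_neg at hbz
              refine Or.inl ?_
              refine Finset.mem_filter.mpr ⟨Finset.mem_univ _, ?_⟩
              by_contra hall
              push_neg at hall
              apply hsum
              rw [hbz, add_zero]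
              exact Finset.sum_eq_zero fun m _ => by rw [hall m, zero_mul]
          exact le_trans (Finset.card_le_card hsub) (Finset.card_union_le _ _)
        refine le_trans (Nat.add_le_add step1 step2) ?_
        set A := (Finset.filter
            (fun p : Fin (ψ.dims (0+1)) × Fin (ψ.dims 0) => ψ.A 0 p.1 p.2 ≠ 0)
            Finset.univ).card
        set B := (Finset.filter (fun i : Fin (ψ.dims (0+1)) => ψ.b 0 i ≠ 0) Finset.univ).card
        have h1 : T.card * e ≤ A * e := Nat.mul_le_mul_right e step3
        have h2 : T.card + B ≤ A + B := Nat.add_le_add_right step3 B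
        have heq : (e+1) * (A + B) = A * e + (B * e + (A + B)) := by ring
        rw [heq]
        exact le_trans (Nat.add_le_add h1 h2) (Nat.add_le_add_left (Nat.le_add_left _ _) _)
      · -- layer j+1
        have s1 : (Finset.filter
            (fun p : Fin ((precompNet ψ e h0 C bv s R).dims (j+1+1)) ×
                Fin ((precompNet ψ e h0 C bv s R).dims (j+1)) =>
              (precompNet ψ e h0 C bv s R).A (j+1) p.1 p.2 ≠ 0) Finset.univ).card
            ≤ (Finset.filter
              (fun p : Fin (ψ.dims (j+1+1)) × Fin (ψ.dims (j+1)) => ψ.A (j+1) p.1 p.2 ≠ 0)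
              Finset.univ).card := by
          refine Finset.card_le_card ?_
          intro p hp
          simp only [Finset.mem_filter, Finset.mem_univ, true_and] at hp ⊢
          refine Finset.mem_filter.mpr ⟨Finset.mem_univ _, ?_⟩
          intro hz
          apply hp
          show (if j + 1 = ψ.L - 1 then s / R else 1) * ψ.A (j+1) p.1 p.2 = 0
          rw [hz, mul_zero]
        have s2 : (Finset.filter
            (fun i : Fin ((precompNet ψ e h0 C bv s R).dims (j+1+1)) =>
              (precompNet ψ e h0 C bv s R).b (j+1) i ≠ 0) Finset.univ).card
            ≤ (Finset.filter (fun i : Fin (ψ.dims (j+1+1)) => ψ.b (j+1) i ≠ 0)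
              Finset.univ).card := by
          refine Finset.card_le_card ?_
          intro i hi
          simp only [Finset.mem_filter, Finset.mem_univ, true_and] at hi ⊢
          refine Finset.mem_filter.mpr ⟨Finset.mem_univ _, ?_⟩
          intro hz
          apply hi
          show ((if j + 1 = ψ.L - 1 then s / R else 1) / s) * ψ.b (j+1) i = 0
          rw [hz, mul_zero]
        refine le_trans (Nat.add_le_add s1 s2) ?_
        exact Nat.le_mul_of_pos_left _ (Nat.succ_pos e)
    exact hle.trans (Nat.mul_le_mul_left _ hW)
  · -- normBdd
    intro j hj
    rcases j with _ | j
    · have hAb := (hnorm 0 hj).1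
      have hfacnn : (0:ℝ) ≤ (if 0 = ψ.L - 1 then s / R else 1) / s := by
        split <;> positivity
      have hfacs : ((if 0 = ψ.L - 1 then s / R else 1) / s) * s ≤ 1 := by
        split
        · rw [div_mul_cancel₀ _ (ne_of_gt hs), div_le_one hR]
          exact hsR
        · rw [div_mul_cancel₀ _ (ne_of_gt hs)]
      refine ⟨?_, ?_⟩
      · intro i k
        show |((if 0 = ψ.L - 1 then s / R else 1) / s) *
          ∑ m : Fin d, ψ.A 0 i (Fin.cast h0.symm m) * C m k| ≤ 1
        have hsumle : |∑ m : Fin d, ψ.A 0 i (Fin.cast h0.symm m) * C m k| ≤ s := by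
          calc |∑ m : Fin d, ψ.A 0 i (Fin.cast h0.symm m) * C m k|
              ≤ ∑ m : Fin d, |ψ.A 0 i (Fin.cast h0.symm m) * C m k| :=
                Finset.abs_sum_le_sum_abs _ _
            _ ≤ ∑ m : Fin d, |C m k| := by
                refine Finset.sum_le_sum fun m _ => ?_
                rw [abs_mul]
                exact mul_le_of_le_one_left (abs_nonneg _) (hAb _ _)
            _ ≤ s := hC k
        rw [abs_mul, abs_of_nonneg hfacnn]
        exact le_trans (mul_le_mul_of_nonneg_left hsumle hfacnn) hfacs
      · intro i
        show |((if 0 = ψ.L - 1 then s / R else 1) / s) *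
          ((∑ m : Fin d, ψ.A 0 i (Fin.cast h0.symm m) * bv m) + ψ.b 0 i)| ≤ 1
        have hsumle : |(∑ m : Fin d, ψ.A 0 i (Fin.cast h0.symm m) * bv m) + ψ.b 0 i| ≤ s := by
          calc |(∑ m : Fin d, ψ.A 0 i (Fin.cast h0.symm m) * bv m) + ψ.b 0 i|
              ≤ |∑ m : Fin d, ψ.A 0 i (Fin.cast h0.symm m) * bv m| + |ψ.b 0 i| := abs_add_le _ _
            _ ≤ (∑ m : Fin d, |bv m|) + 1 := by
                refine add_le_add ?_ ((hnorm 0 hj).2 i)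
                refine le_trans (Finset.abs_sum_le_sum_abs _ _) ?_
                refine Finset.sum_le_sum fun m _ => ?_
                rw [abs_mul]
                exact mul_le_of_le_one_left (abs_nonneg _) (hAb _ _)
            _ ≤ s := hb
        rw [abs_mul, abs_of_nonneg hfacnn]
        exact le_trans (mul_le_mul_of_nonneg_left hsumle hfacnn) hfacs
    · have hAb := hnorm (j+1) hj
      have hu : |(if j + 1 = ψ.L - 1 then s / R else 1)| ≤ 1 := by
        split
        · rw [abs_of_nonneg (by positivity), div_le_one hR]
          exact hsR
        · simp
      refine ⟨?_, ?_⟩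
      · intro i k
        show |(if j + 1 = ψ.L - 1 then s / R else 1) * ψ.A (j+1) i k| ≤ 1
        rw [abs_mul]
        calc |(if j + 1 = ψ.L - 1 then s / R else 1)| * |ψ.A (j+1) i k|
            ≤ 1 * 1 := mul_le_mul hu (hAb.1 i k) (abs_nonneg _) zero_le_one
          _ = 1 := mul_one 1
      · intro i
        show |((if j + 1 = ψ.L - 1 then s / R else 1) / s) * ψ.b (j+1) i| ≤ 1
        rw [abs_mul, abs_div, abs_of_nonneg hs.le]
        have h1 : |(if j + 1 = ψ.L - 1 then s / R else 1)| / s ≤ 1 := by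
          rw [div_le_one hs]
          exact le_trans hu hs1
        calc |(if j + 1 = ψ.L - 1 then s / R else 1)| / s * |ψ.b (j+1) i|
            ≤ 1 * 1 := mul_le_mul h1 (hAb.2 i) (abs_nonneg _) zero_le_one
          _ = 1 := mul_one 1
  · -- realize
    intro x
    refine Eq.trans ?_ (precomp_realize ψ h0 C bv hs hR _ _).symm
    show R⁻¹ * g (C.mulVec x + bv) = _
    congr 1
    rw [hreal (C.mulVec x + bv)]
    exact rfl


/-- **Lemma (dilation).** If `f ∈ U^{α,∞}_ℓ(D)`, then for every `e ∈ ℕ`, matrix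
`C ∈ ℝ^{d×e}` and `b ∈ ℝ^d`, there is `R ∈ (0,∞)` with
`f(C·+b) ∈ R · U^{α,∞}_ℓ(E)`, where `E = {x ∈ ℝ^e : C x + b ∈ D}`. -/
theorem dilation (d : ℕ) (D : Set (Fin d → ℝ))
    (ℓ : ℕ → ℕ∞) (hmono : Monotone ℓ) (α : ℝ) (hα : 0 < α)
    (f : (Fin d → ℝ) → ℝ) (hf : f ∈ UnitBall d α ℓ D)
    (e : ℕ) (C : Matrix (Fin d) (Fin e) ℝ) (b : Fin d → ℝ) :
    ∃ R : ℝ, 0 < R ∧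
      (fun x => f (C.mulVec x + b)) ∈
        R • UnitBall e α ℓ { x : Fin e → ℝ | C.mulVec x + b ∈ D } := by
  have hCnn : (0:ℝ) ≤ ∑ m, ∑ k, |C m k| :=
    Finset.sum_nonneg fun m _ => Finset.sum_nonneg fun k _ => abs_nonneg _
  have hbnn : (0:ℝ) ≤ ∑ m, |b m| := Finset.sum_nonneg fun m _ => abs_nonneg _
  set s : ℝ := 1 + (∑ m, ∑ k, |C m k|) + (∑ m, |b m|) with hsdef
  have hs1 : (1:ℝ) ≤ s := by rw [hsdef]; linarith
  have hs0 : (0:ℝ) < s := lt_of_lt_of_le one_pos hs1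
  have hB1 : (1:ℝ) ≤ 2 * ((e:ℝ) + 1) := by
    have : (0:ℝ) ≤ (e:ℝ) := Nat.cast_nonneg e
    linarith
  have hB0 : (0:ℝ) < 2 * ((e:ℝ) + 1) := lt_of_lt_of_le one_pos hB1
  have hrp1 : (1:ℝ) ≤ (2 * ((e:ℝ) + 1)) ^ α := Real.one_le_rpow hB1 hα.le
  set R : ℝ := s * (2 * ((e:ℝ) + 1)) ^ α with hRdef
  have hsR : s ≤ R := le_mul_of_one_le_right hs0.le hrp1
  have hR0 : (0:ℝ) < R := lt_of_lt_of_le hs0 hsR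
  have hR1 : (1:ℝ) ≤ R := hs1.trans hsR
  -- key numeric inequality
  have hkey : ∀ (k n : ℕ), 0 < k → 0 < n → (k:ℝ) ≤ 2 * ((e:ℝ) + 1) * n →
      R⁻¹ * (n:ℝ) ^ (-α) ≤ (k:ℝ) ^ (-α) := by
    intro k n hk hn hkn
    have hk0 : (0:ℝ) < k := by exact_mod_cast hk
    have hn0 : (0:ℝ) < n := by exact_mod_cast hn
    have h1 : ((2 * ((e:ℝ) + 1) * n) : ℝ) ^ (-α) ≤ (k:ℝ) ^ (-α) :=
      Real.rpow_le_rpow_of_nonpos hk0 hkn (neg_nonpos.mpr hα.le)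
    have h2 : ((2 * ((e:ℝ) + 1) * n) : ℝ) ^ (-α)
        = (2 * ((e:ℝ) + 1)) ^ (-α) * (n:ℝ) ^ (-α) :=
      Real.mul_rpow hB0.le hn0.le
    have h3 : R⁻¹ ≤ (2 * ((e:ℝ) + 1)) ^ (-α) := by
      rw [Real.rpow_neg hB0.le]
      refine inv_anti₀ (by positivity) ?_
      rw [hRdef]
      exact le_mul_of_one_le_left (by positivity) hs1
    calc R⁻¹ * (n:ℝ) ^ (-α) ≤ (2 * ((e:ℝ) + 1)) ^ (-α) * (n:ℝ) ^ (-α) :=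
          mul_le_mul_of_nonneg_right h3 (Real.rpow_nonneg hn0.le _)
      _ = ((2 * ((e:ℝ) + 1) * n) : ℝ) ^ (-α) := h2.symm
      _ ≤ (k:ℝ) ^ (-α) := h1
  -- 1 ≤ ℓ m for m ≥ 1
  have hone : (1:ℕ∞) ≤ ℓ 1 := by
    by_contra hcon
    have h2 := hf.2 1 le_rfl
    have hemp : SigmaSet d 1 ℓ = ∅ := by
      ext g
      simp only [Set.mem_empty_iff_false, iff_false]
      rintro ⟨ψ, _, _, hL, _, hdepth, _, _⟩
      exact hcon (le_trans (by exact_mod_cast hL) hdepth)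
    rw [hemp] at h2
    simp [iInf_emptyset, top_le_iff] at h2
  have hℓ1 : ∀ m : ℕ, 1 ≤ m → (1:ℕ∞) ≤ ℓ m := fun m hm => hone.trans (hmono hm)
  have hCs : ∀ kk : Fin e, (∑ m, |C m kk|) ≤ s := by
    intro kk
    have h4 : (∑ m, |C m kk|) ≤ ∑ m, ∑ k2, |C m k2| :=
      Finset.sum_le_sum fun m _ =>
        Finset.single_le_sum (f := fun k2 => |C m k2|) (fun _ _ => abs_nonneg _) (Finset.mem_univ kk)
    rw [hsdef]; linarith
  have hbs : (∑ m, |b m|) + 1 ≤ s := by rw [hsdef]; linarith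
  refine ⟨R, hR0, ?_⟩
  rw [Set.mem_smul_set_iff_inv_smul_mem₀ (ne_of_gt hR0)]
  refine ⟨?_, ?_⟩
  · intro x hx
    have hfx := hf.1 (C.mulVec x + b) hx
    have hx1 : (R⁻¹ • fun x => f (C.mulVec x + b)) x = R⁻¹ * f (C.mulVec x + b) := rfl
    rw [hx1, abs_mul, abs_of_nonneg (inv_nonneg.mpr hR0.le)]
    calc R⁻¹ * |f (C.mulVec x + b)| ≤ R⁻¹ * 1 :=
          mul_le_mul_of_nonneg_left hfx (inv_nonneg.mpr hR0.le)
      _ = R⁻¹ := mul_one _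
      _ ≤ 1 := inv_le_one_of_one_le₀ hR1
  · intro k hk1
    by_cases hk : e + 1 ≤ k
    · -- large k
      set n := k / (e + 1) with hndef
      have hn1 : 1 ≤ n := (Nat.one_le_div_iff (Nat.succ_pos e)).mpr hk
      have hcn : (e + 1) * n ≤ k := by
        rw [mul_comm]; exact Nat.div_mul_le_self k (e+1)
      have hk2 : (k:ℝ) ≤ 2 * ((e:ℝ) + 1) * n := by
        have hmod : (e+1) * n + k % (e+1) = k := by
          rw [hndef]; exact Nat.div_add_mod k (e+1)
        have hmlt : k % (e+1) < e + 1 := Nat.mod_lt k (Nat.succ_pos e)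
        have h6 : e + 1 ≤ (e+1) * n := Nat.le_mul_of_pos_right (e+1) (by omega)
        have hkn : k ≤ 2 * ((e+1) * n) := by omega
        have hkr := (Nat.cast_le (α := ℝ)).mpr hkn
        push_cast at hkr
        linarith
      refine ENNReal.le_of_forall_pos_le_add fun ε hε _ => ?_
      have h2 := hf.2 n hn1
      have hlt : (⨅ g ∈ SigmaSet d n ℓ, supDist D f g)
          < ENNReal.ofReal ((n:ℝ) ^ (-α)) + ENNReal.ofReal R * ε := by
        refine lt_of_le_of_lt h2 (ENNReal.lt_add_right ENNReal.ofReal_ne_top ?_)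
        exact mul_ne_zero (by simp [ENNReal.ofReal_eq_zero]; linarith)
          (by exact_mod_cast hε.ne')
      simp only [iInf_lt_iff] at hlt
      obtain ⟨g, hgS, hglt⟩ := hlt
      have hg' := sigma_comp hgS C b hs1 hsR hCs hbs
        (hmono (Nat.le_mul_of_pos_left n (Nat.succ_pos e)))
      have hg'' : (fun x => R⁻¹ * g (C.mulVec x + b)) ∈ SigmaSet e k ℓ :=
        SigmaSet_mono hmono hcn hg'
      refine le_trans (iInf₂_le _ hg'') ?_
      have hsup : supDist {x | C.mulVec x + b ∈ D} (R⁻¹ • fun x => f (C.mulVec x + b))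
          (fun x => R⁻¹ * g (C.mulVec x + b)) ≤ ENNReal.ofReal R⁻¹ * supDist D f g := by
        rw [supDist]
        refine iSup₂_le fun x hx => ?_
        have hE : C.mulVec x + b ∈ D := hx
        have habs : |(R⁻¹ • fun x => f (C.mulVec x + b)) x - (fun x => R⁻¹ * g (C.mulVec x + b)) x|
            = R⁻¹ * |f (C.mulVec x + b) - g (C.mulVec x + b)| := by
          have hx1 : (R⁻¹ • fun x => f (C.mulVec x + b)) x = R⁻¹ * f (C.mulVec x + b) := rfl
          rw [hx1]
          show |R⁻¹ * f (C.mulVec x + b) - R⁻¹ * g (C.mulVec x + b)| = _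
          rw [← mul_sub, abs_mul, abs_of_nonneg (inv_nonneg.mpr hR0.le)]
        rw [habs, ENNReal.ofReal_mul (inv_nonneg.mpr hR0.le)]
        refine mul_le_mul_right ?_ _
        exact le_iSup₂ (f := fun y (_ : y ∈ D) => ENNReal.ofReal |f y - g y|) _ hE
      refine le_trans hsup ?_
      calc ENNReal.ofReal R⁻¹ * supDist D f g
          ≤ ENNReal.ofReal R⁻¹ * (ENNReal.ofReal ((n:ℝ) ^ (-α)) + ENNReal.ofReal R * ε) :=
            mul_le_mul_right hglt.le _
        _ = ENNReal.ofReal R⁻¹ * ENNReal.ofReal ((n:ℝ) ^ (-α))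
            + (ENNReal.ofReal R⁻¹ * ENNReal.ofReal R) * ε := by rw [mul_add, mul_assoc]
        _ ≤ ENNReal.ofReal ((k:ℝ) ^ (-α)) + 1 * ε := by
            refine add_le_add ?_ ?_
            · rw [← ENNReal.ofReal_mul (inv_nonneg.mpr hR0.le)]
              exact ENNReal.ofReal_le_ofReal (hkey k n (by omega) (by omega) hk2)
            · refine mul_le_mul_left ?_ _
              rw [← ENNReal.ofReal_mul (inv_nonneg.mpr hR0.le),
                inv_mul_cancel₀ (ne_of_gt hR0), ENNReal.ofReal_one]
        _ = ENNReal.ofReal ((k:ℝ) ^ (-α)) + ε := by rw [one_mul]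
    · -- small k
      push_neg at hk
      refine le_trans (iInf₂_le _ (zero_mem_sigma e k ℓ (hℓ1 k hk1))) ?_
      rw [supDist]
      refine iSup₂_le fun x hx => ?_
      refine ENNReal.ofReal_le_ofReal ?_
      have hfx := hf.1 (C.mulVec x + b) hx
      have hx1 : (R⁻¹ • fun x => f (C.mulVec x + b)) x - (fun _ => (0:ℝ)) x
          = R⁻¹ * f (C.mulVec x + b) := by
        show R⁻¹ * f (C.mulVec x + b) - 0 = _
        rw [sub_zero]
      rw [hx1, abs_mul, abs_of_nonneg (inv_nonneg.mpr hR0.le)]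
      have hRk : R⁻¹ ≤ (k:ℝ) ^ (-α) := by
        have hke : (k:ℝ) ≤ (e:ℝ) + 1 := by exact_mod_cast Nat.le_of_lt_succ (by omega)
        have h8 := hkey k 1 (by omega) one_pos (by push_cast; linarith)
        simpa [Real.one_rpow] using h8
      calc R⁻¹ * |f (C.mulVec x + b)| ≤ R⁻¹ * 1 :=
            mul_le_mul_of_nonneg_left hfx (inv_nonneg.mpr hR0.le)
        _ = R⁻¹ := mul_one _
        _ ≤ (k:ℝ) ^ (-α) := hRk

end
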